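/- Under hypotheses (H1)–(H3), the natural transformation F : Z ⟶ Z' with components F_X (characterized by F_X(v_Z(M)) = v_{Z'}(M) for all M : 𝟙 ⟶ X) is monoidal: F_𝟙 ∘ ε_Z = ε_{Z'} as maps k → Z'(𝟙), and for all objects X, Y of C, F_{X⊗Y} ∘ μ^Z_{X,Y} = μ^{Z'}_{X,Y} ∘ (F_X ⊗ F_Y) as maps Z(X) ⊗ Z(Y) → Z'(X ⊗ Y). -/

import Mathlib

open CategoryTheory MonoidalCategory

universe v u

/-- The distinguished vector `ε_Z(1) ∈ Z(𝟙)` determined by the unit isomorphism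
`ε_Z : k ≅ Z(𝟙)` of a (strong) monoidal functor `Z : C ⥤ ModuleCat k`. -/
noncomputable def unitVec {k : Type*} [Field k] {C : Type u} [Category.{v} C]
    [MonoidalCategory C] (Z : C ⥤ ModuleCat k) [Z.Monoidal] : Z.obj (𝟙_ C) :=
  Functor.LaxMonoidal.ε Z (1 : k)

/-- `v_Z(M) := Z(M)(ε_Z(1)) ∈ Z(X)` for a morphism `M : 𝟙 ⟶ X`. -/
noncomputable def vec {k : Type*} [Field k] {C : Type u} [Category.{v} C]
    [MonoidalCategory C] (Z : C ⥤ ModuleCat k) [Z.Monoidal] {X : C} (M : 𝟙_ C ⟶ X) :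
    Z.obj X :=
  Z.map M (unitVec Z)

section Aux

variable {k : Type*} [Field k] {C : Type u} [Category.{v} C]
    [MonoidalCategory C] (Z : C ⥤ ModuleCat k) [Z.Monoidal]

lemma unitVec_ne_zero : unitVec Z ≠ 0 := by
  intro h
  have h2 : Functor.OplaxMonoidal.η Z (unitVec Z) = (1 : k) := by
    have h3 := ConcreteCategory.congr_hom (Functor.Monoidal.ε_η (F := Z)) (1 : k)
    simp only [ConcreteCategory.comp_apply, ConcreteCategory.id_apply] at h3
    simpa [unitVec] using h3
  rw [h, map_zero] at h2
  exact one_ne_zero h2.symm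

lemma vec_comp {X Y : C} (M : 𝟙_ C ⟶ X) (f : X ⟶ Y) :
    vec Z (M ≫ f) = Z.map f (vec Z M) := by
  simp [vec]

lemma μ_vec_tmul {X Y : C} (M : 𝟙_ C ⟶ X) (N : 𝟙_ C ⟶ Y) :
    Functor.LaxMonoidal.μ Z X Y (vec Z M ⊗ₜ[k] vec Z N) =
      vec Z ((λ_ (𝟙_ C)).inv ≫ (M ⊗ₘ N)) := by
  have h1 : Functor.LaxMonoidal.μ Z (𝟙_ C) (𝟙_ C) (unitVec Z ⊗ₜ[k] unitVec Z) =
      Z.map (λ_ (𝟙_ C)).inv (unitVec Z) := by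
    have h3 := ConcreteCategory.congr_hom (Functor.LaxMonoidal.left_unitality_inv Z (𝟙_ C))
      (unitVec Z)
    simp only [ConcreteCategory.comp_apply,
      ModuleCat.MonoidalCategory.leftUnitor_inv_apply,
      ModuleCat.MonoidalCategory.whiskerRight_apply] at h3
    exact h3
  have h2 := ConcreteCategory.congr_hom (Functor.LaxMonoidal.μ_natural Z M N)
    (unitVec Z ⊗ₜ[k] unitVec Z)
  simp only [ConcreteCategory.comp_apply,
    ModuleCat.MonoidalCategory.tensorHom_tmul] at h2
  unfold vec
  rw [Z.map_comp, ConcreteCategory.comp_apply, ← h1]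
  exact h2

end Aux

/-- Under (H1)–(H3), any family of linear maps `F_X : Z(X) → Z'(X)` with
`F_X (v_Z(M)) = v_{Z'}(M)` for all `M : 𝟙 ⟶ X` is monoidal: it is compatible with the
unit isomorphisms, `F_𝟙 ∘ ε_Z = ε_{Z'}`, and with the tensorators,
`F_{X⊗Y} ∘ μ^Z_{X,Y} = μ^{Z'}_{X,Y} ∘ (F_X ⊗ F_Y)`. -/
theorem components_monoidal {k : Type*} [Field k] {C : Type u} [Category.{v} C]
    [MonoidalCategory C] (Z Z' : C ⥤ ModuleCat k) [Z.Monoidal] [Z'.Monoidal]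
    -- (H1): every object admits a morphism from and a morphism to the unit object
    (H1 : ∀ X : C, Nonempty (𝟙_ C ⟶ X) ∧ Nonempty (X ⟶ 𝟙_ C))
    -- (H2): for every `f : 𝟙 ⟶ 𝟙` the scalars `⟨Z(f)⟩` and `⟨Z'(f)⟩` agree and are nonzero
    (H2 : ∀ f : 𝟙_ C ⟶ 𝟙_ C, ∃ c : k, c ≠ 0 ∧
      Z.map f (unitVec Z) = c • unitVec Z ∧ Z'.map f (unitVec Z') = c • unitVec Z')
    -- (H3): all state spaces are one-dimensional
    (H3 : ∀ X : C, Module.finrank k (Z.obj X) = 1 ∧ Module.finrank k (Z'.obj X) = 1)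
    (F : ∀ X : C, Z.obj X →ₗ[k] Z'.obj X)
    (hF : ∀ (X : C) (M : 𝟙_ C ⟶ X), F X (vec Z M) = vec Z' M) :
    (∀ x : 𝟙_ (ModuleCat k),
        F (𝟙_ C) (Functor.LaxMonoidal.ε Z x) = Functor.LaxMonoidal.ε Z' x) ∧
    (∀ (X Y : C) (u : Z.obj X) (v : Z.obj Y),
        F (X ⊗ Y) (Functor.LaxMonoidal.μ Z X Y (u ⊗ₜ[k] v)) =
          Functor.LaxMonoidal.μ Z' X Y (F X u ⊗ₜ[k] F Y v)) := by
  have hunit : F (𝟙_ C) (unitVec Z) = unitVec Z' := by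
    have := hF (𝟙_ C) (𝟙 (𝟙_ C))
    simpa [vec] using this
  -- every vector is a multiple of `vec Z M`
  have hvecne : ∀ (X : C) (M : 𝟙_ C ⟶ X), vec Z M ≠ 0 := by
    intro X M h
    obtain ⟨N⟩ := (H1 X).2
    obtain ⟨c, hc, hcZ, _⟩ := H2 (M ≫ N)
    rw [Z.map_comp, ConcreteCategory.comp_apply] at hcZ
    rw [show Z.map M (unitVec Z) = vec Z M from rfl, h, map_zero] at hcZ
    exact unitVec_ne_zero Z (by
      rcases smul_eq_zero.1 hcZ.symm with h' | h'
      · exact absurd h' hc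
      · exact h')
  have hspan : ∀ (X : C) (M : 𝟙_ C ⟶ X) (u : Z.obj X), ∃ a : k, u = a • vec Z M := by
    intro X M u
    obtain ⟨a, ha⟩ := ((finrank_eq_one_iff_of_nonzero' (vec Z M) (hvecne X M)).1
      (H3 X).1) u
    exact ⟨a, ha.symm⟩
  constructor
  · have key : (F (𝟙_ C)).comp (Functor.LaxMonoidal.ε Z).hom = (Functor.LaxMonoidal.ε Z').hom := by
      apply LinearMap.ext_ring
      simpa [unitVec] using hunit
    intro x
    exact DFunLike.congr_fun key x
  · intro X Y u v
    obtain ⟨M⟩ := (H1 X).1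
    obtain ⟨N⟩ := (H1 Y).1
    obtain ⟨a, rfl⟩ := hspan X M u
    obtain ⟨b, rfl⟩ := hspan Y N v
    simp only [map_smul, TensorProduct.smul_tmul_smul, μ_vec_tmul Z M N,
      μ_vec_tmul Z' M N, hF]
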